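/- Let G be a finite group acting linearly on ℝ^d through a group homomorphism g ↦ O_g into the orthogonal group O(d), let φ : G → {±1} be a group homomorphism, and let z : G × G → ℂ be a function with |z(g,h)| = 1 for all g,h. Suppose that for each g ∈ G we are given a continuous map U_g : ℝ^d → U(n) into the n×n unitary matrices such that U_g(O_h k)·U_h(k)^{φ_g} = z(g,h)·U_{gh}(k) for all g,h ∈ G and all k ∈ ℝ^d, where A^{φ_g} = A if φ_g = +1 and A^{φ_g} = conj(A) (the entrywise complex conjugate) if φ_g = -1. Then there exists a continuous map V : ℝ^d → U(n) such that U_g(k)·V(k)^{φ_g} = V(O_g k)·U_g(0) for all g ∈ G and all k ∈ ℝ^d. -/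

import Mathlib

open Matrix

namespace CanonicalGauge

open scoped Matrix.Norms.L2Operator

variable {n d : ℕ}




variable {n d : ℕ}

/-! ### the twist operator -/

noncomputable def cop (e : ℤˣ) (A : Matrix (Fin n) (Fin n) ℂ) : Matrix (Fin n) (Fin n) ℂ :=
  if e = 1 then A else A.map (starRingEnd ℂ)

lemma cop_def (e : ℤˣ) (A : Matrix (Fin n) (Fin n) ℂ) :
    cop e A = if e = 1 then A else A.map (starRingEnd ℂ) := rfl

lemma cop_one (e : ℤˣ) : cop e (1 : Matrix (Fin n) (Fin n) ℂ) = 1 := by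
  unfold cop
  split
  · rfl
  · exact Matrix.map_one _ (map_zero _) (map_one _)

lemma cop_mul (e : ℤˣ) (A B : Matrix (Fin n) (Fin n) ℂ) :
    cop e (A * B) = cop e A * cop e B := by
  unfold cop
  split
  · rfl
  · exact Matrix.map_mul

lemma cop_conjTranspose (e : ℤˣ) (A : Matrix (Fin n) (Fin n) ℂ) :
    cop e Aᴴ = (cop e A)ᴴ := by
  unfold cop
  split
  · rfl
  · exact (Matrix.conjTranspose_map (starRingEnd ℂ) (fun a => rfl)).symm

lemma cop_smul (e : ℤˣ) (c : ℂ) (A : Matrix (Fin n) (Fin n) ℂ) :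
    cop e (c • A) = (if e = 1 then c else starRingEnd ℂ c) • cop e A := by
  unfold cop
  split
  · rfl
  · ext i j
    simp [Matrix.map_apply]

lemma cop_real_smul (e : ℤˣ) (r : ℝ) (A : Matrix (Fin n) (Fin n) ℂ) :
    cop e (r • A) = r • cop e A := by
  unfold cop
  split
  · rfl
  · ext i j
    simp [Matrix.map_apply, Complex.conj_ofReal]

lemma cop_add (e : ℤˣ) (A B : Matrix (Fin n) (Fin n) ℂ) :
    cop e (A + B) = cop e A + cop e B := by
  unfold cop; split
  · rfl
  · exact Matrix.map_add _ (map_add _) _ _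

lemma cop_sum (e : ℤˣ) {ι : Type*} (s : Finset ι) (f : ι → Matrix (Fin n) (Fin n) ℂ) :
    cop e (∑ i ∈ s, f i) = ∑ i ∈ s, cop e (f i) := by
  unfold cop; split
  · rfl
  · exact map_sum (AddMonoidHom.mapMatrix (starRingEnd ℂ).toAddMonoidHom) f s

lemma cop_pow (e : ℤˣ) (A : Matrix (Fin n) (Fin n) ℂ) (m : ℕ) :
    cop e (A ^ m) = (cop e A) ^ m := by
  unfold cop; split
  · rfl
  · exact map_pow ((starRingEnd ℂ).mapMatrix) A m

lemma cop_continuous (e : ℤˣ) : Continuous (cop (n := n) e) := by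
  unfold cop; split
  · exact continuous_id
  · exact continuous_id.matrix_map Complex.continuous_conj

lemma cop_tsum (e : ℤˣ) (f : ℕ → Matrix (Fin n) (Fin n) ℂ) (hf : Summable f) :
    cop e (∑' m, f m) = ∑' m, cop e (f m) := by
  unfold cop; split
  · rfl
  · exact ((hf.hasSum.map (AddMonoidHom.mapMatrix (starRingEnd ℂ).toAddMonoidHom)
      (continuous_id.matrix_map Complex.continuous_conj)).tsum_eq).symm




variable {d : ℕ}

noncomputable def nrm (k : Fin d → ℝ) : ℝ := Real.sqrt (k ⬝ᵥ k)

lemma dot_self_nonneg (k : Fin d → ℝ) : 0 ≤ k ⬝ᵥ k :=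
  Finset.sum_nonneg fun i _ => mul_self_nonneg (k i)

lemma nrm_nonneg (k : Fin d → ℝ) : 0 ≤ nrm k := Real.sqrt_nonneg _

lemma nrm_sq (k : Fin d → ℝ) : nrm k ^ 2 = k ⬝ᵥ k := Real.sq_sqrt (dot_self_nonneg k)

lemma nrm_zero : nrm (0 : Fin d → ℝ) = 0 := by
  simp [nrm, dotProduct]

lemma nrm_eq_zero {k : Fin d → ℝ} (h : nrm k = 0) : k = 0 := by
  have h2 : k ⬝ᵥ k = 0 := by
    have := nrm_sq k
    rw [h] at this
    simpa using this.symm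
  funext i
  have := (Finset.sum_eq_zero_iff_of_nonneg
    (fun i _ => mul_self_nonneg (k i))).mp h2 i (Finset.mem_univ i)
  simpa [mul_self_eq_zero] using this

lemma nrm_smul (c : ℝ) (k : Fin d → ℝ) : nrm (c • k) = |c| * nrm k := by
  unfold nrm
  rw [smul_dotProduct, dotProduct_smul, smul_eq_mul, smul_eq_mul, ← mul_assoc,
    Real.sqrt_mul (mul_self_nonneg c), Real.sqrt_mul_self_eq_abs]

lemma abs_coord_le_nrm (k : Fin d → ℝ) (i : Fin d) : |k i| ≤ nrm k := by
  rw [← Real.sqrt_sq_eq_abs]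
  apply Real.sqrt_le_sqrt
  have : k i ^ 2 = k i * k i := sq (k i) ▸ by ring
  rw [this]
  exact Finset.single_le_sum (f := fun j => k j * k j)
    (fun j _ => mul_self_nonneg (k j)) (Finset.mem_univ i)

lemma pi_norm_le_nrm (k : Fin d → ℝ) : ‖k‖ ≤ nrm k := by
  apply pi_norm_le_iff_of_nonneg (nrm_nonneg k) |>.mpr
  intro i
  simpa [Real.norm_eq_abs] using abs_coord_le_nrm k i

lemma continuous_nrm : Continuous (nrm (d := d)) := by
  apply Real.continuous_sqrt.comp
  unfold dotProduct
  exact continuous_finset_sum _ fun i _ => (continuous_apply i).mul (continuous_apply i)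

lemma isCompact_nrm_le (B : ℝ) : IsCompact {x : Fin d → ℝ | nrm x ≤ B} := by
  have hclosed : IsClosed {x : Fin d → ℝ | nrm x ≤ B} :=
    isClosed_le continuous_nrm continuous_const
  have hsub : {x : Fin d → ℝ | nrm x ≤ B} ⊆ Metric.closedBall 0 B := by
    intro x hx
    simp only [Metric.mem_closedBall, dist_zero_right]
    exact le_trans (pi_norm_le_nrm x) hx
  exact (isCompact_closedBall (0 : Fin d → ℝ) B).of_isClosed_subset hclosed hsub

/-- orthogonal matrices preserve `nrm`. -/
lemma nrm_mulVec (A : Matrix (Fin d) (Fin d) ℝ) (hA : A ∈ Matrix.orthogonalGroup (Fin d) ℝ)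
    (k : Fin d → ℝ) : nrm (A *ᵥ k) = nrm k := by
  unfold nrm
  congr 1
  have h1 : star A * A = 1 := mem_unitaryGroup_iff'.mp hA
  have hT : Aᵀ * A = 1 := by simpa [Matrix.star_eq_conjTranspose] using h1
  calc (A *ᵥ k) ⬝ᵥ (A *ᵥ k) = (A *ᵥ k) ᵥ* A ⬝ᵥ k := dotProduct_mulVec _ _ _
    _ = Aᵀ *ᵥ (A *ᵥ k) ⬝ᵥ k := by rw [mulVec_transpose]
    _ = (Aᵀ * A) *ᵥ k ⬝ᵥ k := by rw [mulVec_mulVec]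
    _ = k ⬝ᵥ k := by rw [hT, one_mulVec]

/-! ### the radial clamp -/

noncomputable def clamp (R : ℝ) (k : Fin d → ℝ) : Fin d → ℝ := min 1 (R / nrm k) • k

lemma clamp_zero (k : Fin d → ℝ) : clamp 0 k = 0 := by
  unfold clamp
  rcases eq_or_ne (nrm k) 0 with h | h
  · rw [nrm_eq_zero h]; simp
  · rw [zero_div, min_eq_right zero_le_one, zero_smul]

lemma clamp_eq_self {R : ℝ} {k : Fin d → ℝ} (h : nrm k ≤ R) : clamp R k = k := by
  unfold clamp
  rcases eq_or_ne (nrm k) 0 with h0 | h0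
  · rw [nrm_eq_zero h0]; simp
  · have hpos : 0 < nrm k := lt_of_le_of_ne (nrm_nonneg k) (Ne.symm h0)
    rw [min_eq_left (by rw [le_div_iff₀ hpos]; simpa using h), one_smul]

lemma nrm_clamp_le {R : ℝ} (hR : 0 ≤ R) (k : Fin d → ℝ) : nrm (clamp R k) ≤ R := by
  unfold clamp
  rw [nrm_smul]
  rcases eq_or_ne (nrm k) 0 with h0 | h0
  · rw [h0, mul_zero]; exact hR
  · have hpos : 0 < nrm k := lt_of_le_of_ne (nrm_nonneg k) (Ne.symm h0)
    have h1 : 0 ≤ min 1 (R / nrm k) := le_min zero_le_one (div_nonneg hR hpos.le)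
    rw [abs_of_nonneg h1]
    calc min 1 (R / nrm k) * nrm k ≤ (R / nrm k) * nrm k := by
          apply mul_le_mul_of_nonneg_right (min_le_right _ _) hpos.le
      _ = R := div_mul_cancel₀ R h0

lemma nrm_clamp_le_self {R : ℝ} (hR : 0 ≤ R) (k : Fin d → ℝ) : nrm (clamp R k) ≤ nrm k := by
  unfold clamp
  rw [nrm_smul]
  rcases eq_or_ne (nrm k) 0 with h0 | h0
  · rw [h0, mul_zero]
  · have hpos : 0 < nrm k := lt_of_le_of_ne (nrm_nonneg k) (Ne.symm h0)
    have h1 : 0 ≤ min 1 (R / nrm k) := le_min zero_le_one (div_nonneg hR hpos.le)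
    rw [abs_of_nonneg h1]
    nlinarith [min_le_left 1 (R / nrm k)]

lemma min_one_lipschitz (x y : ℝ) : |min 1 x - min 1 y| ≤ |x - y| := by
  rcases le_total x y with h | h <;> rcases le_total 1 x with h1 | h1 <;>
    rcases le_total 1 y with h2 | h2 <;>
    simp [min_eq_left, min_eq_right, h1, h2, abs_le] <;> constructor <;> linarith [abs_nonneg (x - y), le_abs_self (x - y), neg_abs_le (x - y)]

lemma nrm_clamp_sub_clamp {a b : ℝ} (k : Fin d → ℝ) :
    nrm (clamp a k - clamp b k) ≤ |a - b| := by
  unfold clamp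
  rw [← sub_smul, nrm_smul]
  rcases eq_or_ne (nrm k) 0 with h0 | h0
  · rw [h0, mul_zero]; exact abs_nonneg _
  · have hpos : 0 < nrm k := lt_of_le_of_ne (nrm_nonneg k) (Ne.symm h0)
    calc |min 1 (a / nrm k) - min 1 (b / nrm k)| * nrm k
        ≤ |a / nrm k - b / nrm k| * nrm k :=
          mul_le_mul_of_nonneg_right (min_one_lipschitz _ _) hpos.le
      _ = |a - b| := by
          rw [div_sub_div_same, abs_div, abs_of_pos hpos, div_mul_cancel₀ _ h0]

lemma clamp_mulVec (R : ℝ) (A : Matrix (Fin d) (Fin d) ℝ)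
    (hA : A ∈ Matrix.orthogonalGroup (Fin d) ℝ) (k : Fin d → ℝ) :
    clamp R (A *ᵥ k) = A *ᵥ clamp R k := by
  unfold clamp
  rw [nrm_mulVec A hA, mulVec_smul]

lemma continuous_clamp {R : ℝ} (hR : 0 ≤ R) : Continuous (clamp (d := d) R) := by
  rw [continuous_iff_continuousAt]
  intro k0
  rcases eq_or_ne (nrm k0) 0 with h0 | h0
  · have hk0 : k0 = 0 := nrm_eq_zero h0
    subst hk0
    have hc0 : clamp R (0 : Fin d → ℝ) = 0 := by unfold clamp; simp
    rw [ContinuousAt, hc0]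
    apply squeeze_zero_norm (fun k => (pi_norm_le_nrm _).trans (nrm_clamp_le_self hR k))
    have := continuous_nrm.tendsto (0 : Fin d → ℝ)
    rwa [nrm_zero] at this
  · unfold clamp
    apply ContinuousAt.fun_smul _ continuousAt_id
    exact (continuousAt_const.min
      (continuousAt_const.div continuous_nrm.continuousAt h0))



noncomputable def bseq : ℕ → ℝ
  | 0 => 1
  | m + 1 => bseq m * (2 * m + 1) / (2 * m + 2)

lemma bseq_zero : bseq 0 = 1 := rfl

lemma bseq_nonneg (m : ℕ) : 0 ≤ bseq m := by
  induction m with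
  | zero => norm_num [bseq]
  | succ m ih =>
    rw [bseq]
    positivity

lemma bseq_le_one (m : ℕ) : bseq m ≤ 1 := by
  induction m with
  | zero => norm_num [bseq]
  | succ m ih =>
    rw [bseq, div_le_one (by positivity)]
    nlinarith [bseq_nonneg m]

lemma bseq_key (m : ℕ) : (2 * (m:ℝ) + 2) * bseq (m + 1) = (2 * m + 1) * bseq m := by
  rw [bseq]
  field_simp

noncomputable def cseq (N : ℕ) : ℝ := ∑ m ∈ Finset.range (N + 1), bseq m * bseq (N - m)

lemma two_weighted (N : ℕ) :
    2 * (∑ m ∈ Finset.range (N + 1), (m : ℝ) * (bseq m * bseq (N - m)))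
      = N * cseq N := by
  have h1 : (∑ m ∈ Finset.range (N + 1), (m : ℝ) * (bseq m * bseq (N - m)))
      = ∑ m ∈ Finset.range (N + 1), ((N - m : ℕ) : ℝ) * (bseq (N - m) * bseq m) := by
    rw [← Finset.sum_range_reflect]
    apply Finset.sum_congr rfl
    intro m hm
    have hm' : m ≤ N := Nat.lt_succ_iff.mp (Finset.mem_range.mp hm)
    have e1 : N + 1 - 1 - m = N - m := by omega
    have e2 : N - (N - m) = m := by omega
    rw [e1, e2]
  have h2 : 2 * (∑ m ∈ Finset.range (N + 1), (m : ℝ) * (bseq m * bseq (N - m)))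
      = (∑ m ∈ Finset.range (N + 1), (m : ℝ) * (bseq m * bseq (N - m)))
        + ∑ m ∈ Finset.range (N + 1), ((N - m : ℕ) : ℝ) * (bseq (N - m) * bseq m) := by
    rw [← h1]; ring
  rw [h2, ← Finset.sum_add_distrib]
  unfold cseq
  rw [Finset.mul_sum]
  apply Finset.sum_congr rfl
  intro m hm
  have hm' : m ≤ N := Nat.lt_succ_iff.mp (Finset.mem_range.mp hm)
  have e3 : ((N - m : ℕ) : ℝ) = (N : ℝ) - m := by
    rw [Nat.cast_sub hm']
  rw [e3]
  ring

lemma cseq_eq_one (N : ℕ) : cseq N = 1 := by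
  induction N with
  | zero => norm_num [cseq, bseq]
  | succ n ih =>
    have h2W : 2 * (∑ m ∈ Finset.range (n + 2), (m : ℝ) * (bseq m * bseq (n + 1 - m)))
        = (n + 1 : ℝ) * cseq (n + 1) := by
      have := two_weighted (n + 1)
      push_cast at this ⊢
      convert this using 3
    -- shift the sum
    have hshift : (∑ m ∈ Finset.range (n + 2), (m : ℝ) * (bseq m * bseq (n + 1 - m)))
        = ∑ i ∈ Finset.range (n + 1), ((i : ℝ) + 1) * (bseq (i + 1) * bseq (n - i)) := by
      rw [Finset.sum_range_succ' (fun m => (m : ℝ) * (bseq m * bseq (n + 1 - m))) (n + 1)]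
      simp only [Nat.cast_zero, zero_mul, add_zero]
      apply Finset.sum_congr rfl
      intro i hi
      have : n + 1 - (i + 1) = n - i := by omega
      rw [this]
      push_cast
      ring
    have hrec : ∀ i : ℕ, ((i : ℝ) + 1) * bseq (i + 1) = (2 * i + 1) / 2 * bseq i := by
      intro i
      have := bseq_key i
      linarith
    have hsub : (∑ i ∈ Finset.range (n + 1), ((i : ℝ) + 1) * (bseq (i + 1) * bseq (n - i)))
        = ∑ i ∈ Finset.range (n + 1),
            ((i : ℝ) * (bseq i * bseq (n - i)) + (1 / 2) * (bseq i * bseq (n - i))) := by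
      apply Finset.sum_congr rfl
      intro i hi
      have h := hrec i
      have : ((i : ℝ) + 1) * (bseq (i + 1) * bseq (n - i))
          = (((i : ℝ) + 1) * bseq (i + 1)) * bseq (n - i) := by ring
      rw [this, h]
      ring
    have hQ := two_weighted n
    have hC : cseq n = 1 := ih
    -- combine
    rw [hshift, hsub, Finset.sum_add_distrib, ← Finset.mul_sum] at h2W
    rw [hC] at hQ
    have hcsum : (∑ i ∈ Finset.range (n + 1), bseq i * bseq (n - i)) = 1 := ih
    rw [hcsum] at h2W
    have : (n + 1 : ℝ) * cseq (n + 1) = (n + 1 : ℝ) := by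
      rw [← h2W]
      linarith
    have hne : (n + 1 : ℝ) ≠ 0 := by positivity
    field_simp at this
    linarith [this]




variable {n : ℕ}

lemma matnorm_one_le : ‖(1 : Matrix (Fin n) (Fin n) ℂ)‖ ≤ 1 := by
  rw [Matrix.cstar_norm_def, _root_.map_one]
  exact ContinuousLinearMap.norm_id_le

lemma matnorm_pow_le {X : Matrix (Fin n) (Fin n) ℂ} {r : ℝ} (hr : 0 ≤ r) (hX : ‖X‖ ≤ r)
    (hr1 : r ≤ 1) (m : ℕ) : ‖X ^ m‖ ≤ r ^ m := by
  induction m with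
  | zero => simpa using matnorm_one_le.trans (by norm_num)
  | succ m ih =>
    rw [pow_succ, pow_succ]
    calc ‖X ^ m * X‖ ≤ ‖X ^ m‖ * ‖X‖ := Matrix.l2_opNorm_mul _ _
      _ ≤ r ^ m * r := mul_le_mul ih hX (norm_nonneg _) (by positivity)

lemma unitary_norm_le {A : Matrix (Fin n) (Fin n) ℂ} (h : A ∈ Matrix.unitaryGroup (Fin n) ℂ) :
    ‖A‖ ≤ 1 := by
  have h2 : ‖Aᴴ * A‖ = ‖A‖ * ‖A‖ := Matrix.l2_opNorm_conjTranspose_mul_self A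
  have h3 : Aᴴ * A = 1 := by
    simpa [Matrix.star_eq_conjTranspose] using (Matrix.mem_unitaryGroup_iff'.mp h)
  have h5 : ‖A‖ * ‖A‖ ≤ 1 := by rw [← h2, h3]; exact matnorm_one_le
  nlinarith [norm_nonneg A]

noncomputable def invS (X : Matrix (Fin n) (Fin n) ℂ) : Matrix (Fin n) (Fin n) ℂ :=
  ∑' m : ℕ, (bseq m : ℂ) • X ^ m

section invS
variable {X : Matrix (Fin n) (Fin n) ℂ}

lemma invS_term_norm (hX : ‖X‖ ≤ 9/16) (m : ℕ) :
    ‖(bseq m : ℂ) • X ^ m‖ ≤ (9/16 : ℝ) ^ m := by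
  rw [norm_smul]
  have h1 : ‖(bseq m : ℂ)‖ ≤ 1 := by
    rw [Complex.norm_real, Real.norm_eq_abs, abs_of_nonneg (bseq_nonneg m)]
    exact bseq_le_one m
  calc ‖(bseq m : ℂ)‖ * ‖X ^ m‖ ≤ 1 * (9/16 : ℝ) ^ m :=
        mul_le_mul h1 (matnorm_pow_le (by norm_num) hX (by norm_num) m) (norm_nonneg _)
          zero_le_one
    _ = _ := one_mul _

lemma summable_geom916 : Summable (fun m : ℕ => (9/16 : ℝ) ^ m) :=
  summable_geometric_of_lt_one (by norm_num) (by norm_num)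

lemma invS_summable (hX : ‖X‖ ≤ 9/16) :
    Summable (fun m : ℕ => (bseq m : ℂ) • X ^ m) :=
  Summable.of_norm_bounded summable_geom916 (invS_term_norm hX)

lemma pow_summable (hX : ‖X‖ ≤ 9/16) : Summable (fun m : ℕ => X ^ m) :=
  Summable.of_norm_bounded summable_geom916
    (fun m => matnorm_pow_le (by norm_num) hX (by norm_num) m)

lemma invS_mul_invS (hX : ‖X‖ ≤ 9/16) : invS X * invS X = ∑' m : ℕ, X ^ m := by
  unfold invS
  rw [tsum_mul_tsum_eq_tsum_sum_antidiagonal_of_summable_norm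
    (Summable.of_nonneg_of_le (fun _ => norm_nonneg _) (invS_term_norm hX) summable_geom916)
    (Summable.of_nonneg_of_le (fun _ => norm_nonneg _) (invS_term_norm hX) summable_geom916)]
  congr 1
  funext N
  have hterm : ∀ kl ∈ Finset.HasAntidiagonal.antidiagonal N,
      ((bseq kl.1 : ℂ) • X ^ kl.1) * ((bseq kl.2 : ℂ) • X ^ kl.2)
        = (bseq kl.1 * bseq kl.2 : ℝ) • X ^ N := by
    intro kl hkl
    have hsum : kl.1 + kl.2 = N := Finset.HasAntidiagonal.mem_antidiagonal.mp hkl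
    rw [smul_mul_smul_comm, ← pow_add, hsum]
    norm_cast
  rw [Finset.sum_congr rfl hterm, ← Finset.sum_smul]
  have : (∑ kl ∈ Finset.HasAntidiagonal.antidiagonal N, (bseq kl.1 * bseq kl.2 : ℝ)) = 1 := by
    rw [Finset.Nat.sum_antidiagonal_eq_sum_range_succ_mk]
    exact cseq_eq_one N
  rw [this, one_smul]

lemma tsum_pow_mul_one_sub (hX : ‖X‖ ≤ 9/16) : (∑' m : ℕ, X ^ m) * (1 - X) = 1 := by
  have hX1 : ‖X‖ < 1 := lt_of_le_of_lt hX (by norm_num)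
  have hs := (pow_summable hX).hasSum
  have h1 : Filter.Tendsto (fun N => (∑ i ∈ Finset.range N, X ^ i) * (1 - X))
      Filter.atTop (nhds ((∑' m : ℕ, X ^ m) * (1 - X))) :=
    hs.tendsto_sum_nat.mul tendsto_const_nhds
  have h2 : ∀ N, (∑ i ∈ Finset.range N, X ^ i) * (1 - X) = 1 - X ^ N := by
    intro N
    have h := geom_sum_mul X N
    have e1 : (∑ i ∈ Finset.range N, X ^ i) * (1 - X)
        = -((∑ i ∈ Finset.range N, X ^ i) * (X - 1)) := by
      simp only [mul_sub, mul_one]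
      abel
    rw [e1, h, neg_sub]
  have h3 : Filter.Tendsto (fun N : ℕ => 1 - X ^ N) Filter.atTop
      (nhds (1 - 0 : Matrix (Fin n) (Fin n) ℂ)) :=
    tendsto_const_nhds.sub (tendsto_pow_atTop_nhds_zero_of_norm_lt_one hX1)
  rw [sub_zero] at h3
  exact tendsto_nhds_unique (by simpa only [h2] using h1) h3

lemma invS_sq_mul (hX : ‖X‖ ≤ 9/16) : invS X * invS X * (1 - X) = 1 := by
  rw [invS_mul_invS hX, tsum_pow_mul_one_sub hX]

lemma invS_herm (hX : ‖X‖ ≤ 9/16) (hh : Xᴴ = X) : (invS X)ᴴ = invS X := by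
  unfold invS
  rw [← Matrix.star_eq_conjTranspose, tsum_star]
  congr 1
  funext m
  rw [star_smul, star_pow, Matrix.star_eq_conjTranspose, hh, Complex.star_def,
    Complex.conj_ofReal]

lemma invS_commute (hX : ‖X‖ ≤ 9/16) : X * invS X = invS X * X := by
  unfold invS
  rw [← (invS_summable hX).tsum_mul_left X, ← (invS_summable hX).tsum_mul_right X]
  congr 1
  funext m
  rw [mul_smul_comm, smul_mul_assoc, ← pow_succ, ← pow_succ']

lemma invS_zero : invS (0 : Matrix (Fin n) (Fin n) ℂ) = 1 := by
  unfold invS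
  rw [tsum_eq_single 0]
  · simp [bseq]
  · intro m hm
    rw [zero_pow hm, smul_zero]

lemma invS_conj {u : Matrix (Fin n) (Fin n) ℂ} (h1 : uᴴ * u = 1) (h2 : u * uᴴ = 1)
    (hX : Summable (fun m : ℕ => (bseq m : ℂ) • X ^ m)) :
    invS (u * X * uᴴ) = u * invS X * uᴴ := by
  have hpow : ∀ m : ℕ, (u * X * uᴴ) ^ m = u * X ^ m * uᴴ := by
    intro m
    induction m with
    | zero => rw [pow_zero, pow_zero, mul_one, h2]
    | succ m ih =>
      rw [pow_succ, pow_succ, ih]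
      calc u * X ^ m * uᴴ * (u * X * uᴴ) = u * X ^ m * (uᴴ * u) * X * uᴴ := by
            simp only [Matrix.mul_assoc]
        _ = u * (X ^ m * X) * uᴴ := by rw [h1, Matrix.mul_one]; simp only [Matrix.mul_assoc]
  unfold invS
  simp only [hpow]
  have hterm : ∀ m : ℕ, (bseq m : ℂ) • (u * X ^ m * uᴴ) = u * ((bseq m : ℂ) • X ^ m) * uᴴ := by
    intro m
    rw [mul_smul_comm, smul_mul_assoc]
  simp only [hterm]
  rw [((hX.mul_left u)).tsum_mul_right uᴴ, hX.tsum_mul_left u]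


end invS

lemma Xnorm_le {N : Matrix (Fin n) (Fin n) ℂ} (h : ‖N - 1‖ ≤ 1/4) :
    ‖(1 : Matrix (Fin n) (Fin n) ℂ) - Nᴴ * N‖ ≤ 9/16 := by
  have hNH : ‖Nᴴ - 1‖ = ‖N - 1‖ := by
    rw [show Nᴴ - 1 = (N - 1)ᴴ by rw [Matrix.conjTranspose_sub, Matrix.conjTranspose_one]]
    exact Matrix.l2_opNorm_conjTranspose _
  have hN : ‖Nᴴ‖ ≤ 5/4 := by
    calc ‖Nᴴ‖ = ‖N‖ := Matrix.l2_opNorm_conjTranspose _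
      _ = ‖(N - 1) + 1‖ := by rw [sub_add_cancel]
      _ ≤ ‖N - 1‖ + ‖(1 : Matrix (Fin n) (Fin n) ℂ)‖ := norm_add_le _ _
      _ ≤ 1/4 + 1 := add_le_add h matnorm_one_le
      _ = 5/4 := by norm_num
  have hdecomp : (1 : Matrix (Fin n) (Fin n) ℂ) - Nᴴ * N = -(Nᴴ * (N - 1) + (Nᴴ - 1)) := by
    rw [Matrix.mul_sub, Matrix.mul_one]
    abel
  rw [hdecomp, norm_neg]
  calc ‖Nᴴ * (N - 1) + (Nᴴ - 1)‖ ≤ ‖Nᴴ * (N - 1)‖ + ‖Nᴴ - 1‖ := norm_add_le _ _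
    _ ≤ ‖Nᴴ‖ * ‖N - 1‖ + ‖N - 1‖ :=
        add_le_add (Matrix.l2_opNorm_mul _ _) (le_of_eq hNH)
    _ ≤ (5/4) * (1/4) + 1/4 :=
        add_le_add (mul_le_mul hN h (norm_nonneg _) (by norm_num)) h
    _ ≤ 9/16 := by norm_num

lemma mstep_unitary {N : Matrix (Fin n) (Fin n) ℂ} (h : ‖N - 1‖ ≤ 1/4) :
    N * invS (1 - Nᴴ * N) ∈ Matrix.unitaryGroup (Fin n) ℂ := by
  set X := (1 : Matrix (Fin n) (Fin n) ℂ) - Nᴴ * N with hXdef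
  have hX : ‖X‖ ≤ 9/16 := Xnorm_le h
  have hh : Xᴴ = X := by
    rw [hXdef]
    rw [Matrix.conjTranspose_sub, Matrix.conjTranspose_one, Matrix.conjTranspose_mul,
      Matrix.conjTranspose_conjTranspose]
  set S := invS X with hS
  have hSh : Sᴴ = S := invS_herm hX hh
  have hcomm : X * S = S * X := invS_commute hX
  have key : (N * S)ᴴ * (N * S) = 1 := by
    rw [Matrix.conjTranspose_mul, hSh]
    have h1 : Nᴴ * N = 1 - X := by rw [hXdef]; abel
    calc S * Nᴴ * (N * S) = S * (Nᴴ * N) * S := by simp only [Matrix.mul_assoc]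
      _ = S * ((1 - X) * S) := by rw [h1]; simp only [Matrix.mul_assoc]
      _ = S * (S * (1 - X)) := by
          congr 1
          rw [Matrix.sub_mul, Matrix.mul_sub, Matrix.one_mul, Matrix.mul_one, hcomm]
      _ = S * S * (1 - X) := by simp only [Matrix.mul_assoc]
      _ = 1 := invS_sq_mul hX
  rw [Matrix.mem_unitaryGroup_iff]
  rw [Matrix.star_eq_conjTranspose]
  exact mul_eq_one_comm.mp key





lemma cop_sub (e : ℤˣ) (A B : Matrix (Fin n) (Fin n) ℂ) :
    cop e (A - B) = cop e A - cop e B := by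
  unfold cop; split
  · rfl
  · exact map_sub (AddMonoidHom.mapMatrix (starRingEnd ℂ).toAddMonoidHom) A B

lemma summable_cop (e : ℤˣ) {f : ℕ → Matrix (Fin n) (Fin n) ℂ} (hf : Summable f) :
    Summable (fun m => cop e (f m)) := by
  unfold cop; split
  · exact hf
  · exact hf.map (AddMonoidHom.mapMatrix (starRingEnd ℂ).toAddMonoidHom)
      (continuous_id.matrix_map Complex.continuous_conj)

lemma invS_cop (e : ℤˣ) {X : Matrix (Fin n) (Fin n) ℂ}
    (hX : Summable (fun m : ℕ => (bseq m : ℂ) • X ^ m)) :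
    invS (cop e X) = cop e (invS X) := by
  unfold invS
  rw [cop_tsum e _ hX]
  congr 1
  funext m
  rw [cop_smul, cop_pow]
  congr 1
  simp [Complex.conj_ofReal]

section Main

variable {G : Type} [Group G] [Fintype G]
  (O : G →* Matrix.orthogonalGroup (Fin d) ℝ)
  (φ : G →* ℤˣ)
  (z : G → G → ℂ)
  (U : G → (Fin d → ℝ) → Matrix (Fin n) (Fin n) ℂ)

/-- the action of `g` on `ℝ^d`. -/
noncomputable def Ovec (g : G) (k : Fin d → ℝ) : Fin d → ℝ :=
  (O g : Matrix (Fin d) (Fin d) ℝ) *ᵥ k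

lemma Ovec_Ovec (g h : G) (k : Fin d → ℝ) : Ovec O g (Ovec O h k) = Ovec O (g * h) k := by
  unfold Ovec
  rw [mulVec_mulVec]
  congr 1
  rw [← MulMemClass.coe_mul, ← _root_.map_mul O g h]

lemma Ovec_inv_cancel (g : G) (k : Fin d → ℝ) : Ovec O g (Ovec O g⁻¹ k) = k := by
  rw [Ovec_Ovec, mul_inv_cancel]
  unfold Ovec
  rw [_root_.map_one O, OneMemClass.coe_one, one_mulVec]

lemma nrm_Ovec (g : G) (k : Fin d → ℝ) : nrm (Ovec O g k) = nrm k :=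
  nrm_mulVec _ (SetLike.coe_mem (O g)) k

lemma clamp_Ovec (R : ℝ) (g : G) (k : Fin d → ℝ) :
    clamp R (Ovec O g k) = Ovec O g (clamp R k) :=
  clamp_mulVec R _ (SetLike.coe_mem (O g)) k

lemma continuous_Ovec (g : G) : Continuous (Ovec O g) :=
  continuous_const.matrix_mulVec continuous_id

variable (hUunitary : ∀ (g : G) (k : Fin d → ℝ), U g k ∈ Matrix.unitaryGroup (Fin n) ℂ)
  (hz : ∀ g h : G, ‖z g h‖ = 1)
  (hcoc : ∀ (g h : G) (k : Fin d → ℝ),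
      U g (Ovec O h k) * cop (φ g) (U h k) = z g h • U (g * h) k)

/-- the `h`-term in the equivariant average. -/
noncomputable def Ag (a b : ℝ) (h : G) (k : Fin d → ℝ) : Matrix (Fin n) (Fin n) ℂ :=
  U h (clamp a (Ovec O h⁻¹ k)) * (U h (clamp b (Ovec O h⁻¹ k)))ᴴ

noncomputable def Nmat (a b : ℝ) (k : Fin d → ℝ) : Matrix (Fin n) (Fin n) ℂ :=
  ((Fintype.card G : ℂ))⁻¹ • ∑ h : G, Ag O U a b h k

section EquivLemmas

include hUunitary hz hcoc

lemma Ag_equiv (a b : ℝ) (g h : G) (k : Fin d → ℝ) :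
    U g (clamp a k) * cop (φ g) (Ag O U a b h k)
      = Ag O U a b (g * h) (Ovec O g k) * U g (clamp b k) := by
  set x := Ovec O h⁻¹ k with hx
  set qa := clamp a x with hqa
  set qb := clamp b x with hqb
  have hOa : Ovec O h qa = clamp a k := by
    rw [hqa, ← clamp_Ovec, hx, Ovec_inv_cancel]
  have hOb : Ovec O h qb = clamp b k := by
    rw [hqb, ← clamp_Ovec, hx, Ovec_inv_cancel]
  have E1 : U g (clamp a k) * cop (φ g) (U h qa) = z g h • U (g * h) qa := by
    rw [← hOa]; exact hcoc g h qa
  have E2 : U g (clamp b k) * cop (φ g) (U h qb) = z g h • U (g * h) qb := by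
    rw [← hOb]; exact hcoc g h qb
  have hub : (U g (clamp b k))ᴴ * U g (clamp b k) = 1 := by
    have := Matrix.mem_unitaryGroup_iff'.mp (hUunitary g (clamp b k))
    rwa [Matrix.star_eq_conjTranspose] at this
  have E2' : cop (φ g) (U h qb) = (U g (clamp b k))ᴴ * (z g h • U (g * h) qb) := by
    rw [← E2, ← Matrix.mul_assoc, hub, Matrix.one_mul]
  have hzz : z g h * starRingEnd ℂ (z g h) = 1 := by
    rw [Complex.mul_conj]
    norm_cast
    rw [Complex.normSq_eq_norm_sq, hz g h, one_pow]
  have hAg : cop (φ g) (Ag O U a b h k) = cop (φ g) (U h qa) * (cop (φ g) (U h qb))ᴴ := by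
    unfold Ag
    rw [← hx, ← hqa, ← hqb, cop_mul, cop_conjTranspose]
  -- the index identity
  have hidx : Ovec O (g * h)⁻¹ (Ovec O g k) = x := by
    rw [Ovec_Ovec, hx]
    congr 1
    group
  calc U g (clamp a k) * cop (φ g) (Ag O U a b h k)
      = (U g (clamp a k) * cop (φ g) (U h qa)) * (cop (φ g) (U h qb))ᴴ := by
        rw [hAg, Matrix.mul_assoc]
    _ = (z g h • U (g * h) qa) * ((z g h • U (g * h) qb)ᴴ * U g (clamp b k)) := by
        rw [E1, E2', Matrix.conjTranspose_mul, Matrix.conjTranspose_conjTranspose]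
    _ = (z g h • U (g * h) qa) * ((starRingEnd ℂ (z g h) • (U (g * h) qb)ᴴ) * U g (clamp b k)) := by
        rw [Matrix.conjTranspose_smul]
        rfl
    _ = (z g h * starRingEnd ℂ (z g h)) • (U (g * h) qa * ((U (g * h) qb)ᴴ * U g (clamp b k))) := by
        rw [smul_mul_assoc, smul_mul_assoc, mul_smul_comm, smul_smul]
    _ = U (g * h) qa * ((U (g * h) qb)ᴴ * U g (clamp b k)) := by rw [hzz, one_smul]
    _ = Ag O U a b (g * h) (Ovec O g k) * U g (clamp b k) := by
        unfold Ag
        rw [hidx, ← hqa, ← hqb, Matrix.mul_assoc]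

lemma Nmat_equiv (a b : ℝ) (g : G) (k : Fin d → ℝ) :
    U g (clamp a k) * cop (φ g) (Nmat O U a b k)
      = Nmat O U a b (Ovec O g k) * U g (clamp b k) := by
  unfold Nmat
  rw [cop_smul, cop_sum]
  have hconj : (if φ g = 1 then ((Fintype.card G : ℂ))⁻¹
      else starRingEnd ℂ ((Fintype.card G : ℂ))⁻¹) = ((Fintype.card G : ℂ))⁻¹ := by
    split
    · rfl
    · rw [map_inv₀, map_natCast]
  rw [hconj, mul_smul_comm, Finset.mul_sum]
  have hterm : ∀ h ∈ Finset.univ (α := G),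
      U g (clamp a k) * cop (φ g) (Ag O U a b h k)
        = Ag O U a b (g * h) (Ovec O g k) * U g (clamp b k) :=
    fun h _ => Ag_equiv O φ z U hUunitary hz hcoc a b g h k
  rw [Finset.sum_congr rfl hterm, ← Finset.sum_mul]
  have hre : (∑ h : G, Ag O U a b (g * h) (Ovec O g k))
      = ∑ h : G, Ag O U a b h (Ovec O g k) :=
    Fintype.sum_equiv (Equiv.mulLeft g) _ _ (fun h => rfl)
  rw [hre, smul_mul_assoc]

end EquivLemmas

lemma Nmat_norm (a b : ℝ)
    (hUunitary : ∀ (g : G) (k : Fin d → ℝ), U g k ∈ Matrix.unitaryGroup (Fin n) ℂ)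
    (Hstep : ∀ (h : G) (x : Fin d → ℝ), ‖U h (clamp a x) - U h (clamp b x)‖ ≤ 1/4)
    (k : Fin d → ℝ) : ‖Nmat O U a b k - 1‖ ≤ 1/4 := by
  have hcard : (0:ℝ) < Fintype.card G := by
    exact_mod_cast Fintype.card_pos
  have hAg : ∀ h : G, ‖Ag O U a b h k - 1‖ ≤ 1/4 := by
    intro h
    set x := Ovec O h⁻¹ k
    have husr : U h (clamp b x) * (U h (clamp b x))ᴴ = 1 := by
      have := Matrix.mem_unitaryGroup_iff.mp (hUunitary h (clamp b x))
      rwa [Matrix.star_eq_conjTranspose] at this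
    have hdecomp : Ag O U a b h k - 1
        = (U h (clamp a x) - U h (clamp b x)) * (U h (clamp b x))ᴴ := by
      unfold Ag
      rw [Matrix.sub_mul, husr]
    rw [hdecomp]
    calc ‖(U h (clamp a x) - U h (clamp b x)) * (U h (clamp b x))ᴴ‖
        ≤ ‖U h (clamp a x) - U h (clamp b x)‖ * ‖(U h (clamp b x))ᴴ‖ :=
          Matrix.l2_opNorm_mul _ _
      _ ≤ (1/4) * 1 := by
          apply mul_le_mul (Hstep h x) _ (norm_nonneg _) (by norm_num)
          rw [Matrix.l2_opNorm_conjTranspose]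
          exact unitary_norm_le (hUunitary h _)
      _ = 1/4 := by norm_num
  have hcardC : (Fintype.card G : ℂ) ≠ 0 := by
    exact_mod_cast Fintype.card_ne_zero
  have hone : (1 : Matrix (Fin n) (Fin n) ℂ)
      = ((Fintype.card G : ℂ))⁻¹ • ∑ _h : G, (1 : Matrix (Fin n) (Fin n) ℂ) := by
    rw [Finset.sum_const, Finset.card_univ, ← Nat.cast_smul_eq_nsmul ℂ, smul_smul,
      inv_mul_cancel₀ hcardC, one_smul]
  have hdiff : Nmat O U a b k - 1
      = ((Fintype.card G : ℂ))⁻¹ • ∑ h : G, (Ag O U a b h k - 1) := by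
    rw [Finset.sum_sub_distrib, smul_sub]
    unfold Nmat
    rw [← hone]
  rw [hdiff, norm_smul]
  have hnormc : ‖((Fintype.card G : ℂ))⁻¹‖ = ((Fintype.card G : ℝ))⁻¹ := by
    rw [norm_inv, Complex.norm_natCast]
  rw [hnormc]
  have hsum : ‖∑ h : G, (Ag O U a b h k - 1)‖ ≤ (Fintype.card G : ℝ) * (1/4) := by
    calc ‖∑ h : G, (Ag O U a b h k - 1)‖ ≤ ∑ h : G, ‖Ag O U a b h k - 1‖ := norm_sum_le _ _
      _ ≤ ∑ _h : G, (1/4 : ℝ) := Finset.sum_le_sum (fun h _ => hAg h)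
      _ = (Fintype.card G : ℝ) * (1/4) := by
          rw [Finset.sum_const, Finset.card_univ, nsmul_eq_mul]
  calc ((Fintype.card G : ℝ))⁻¹ * ‖∑ h : G, (Ag O U a b h k - 1)‖
      ≤ ((Fintype.card G : ℝ))⁻¹ * ((Fintype.card G : ℝ) * (1/4)) := by
        apply mul_le_mul_of_nonneg_left hsum (by positivity)
    _ = 1/4 := by
        field_simp

lemma avg_one : ((Fintype.card G : ℂ))⁻¹ • ∑ _h : G, (1 : Matrix (Fin n) (Fin n) ℂ) = 1 := by
  have hcardC : (Fintype.card G : ℂ) ≠ 0 := by exact_mod_cast Fintype.card_ne_zero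
  rw [Finset.sum_const, Finset.card_univ, ← Nat.cast_smul_eq_nsmul ℂ, smul_smul,
    inv_mul_cancel₀ hcardC, one_smul]

lemma invS_cop_summable (e : ℤˣ) {X : Matrix (Fin n) (Fin n) ℂ}
    (hX : Summable (fun m : ℕ => (bseq m : ℂ) • X ^ m)) :
    Summable (fun m : ℕ => (bseq m : ℂ) • (cop e X) ^ m) := by
  have h := summable_cop e hX
  have heq : (fun m : ℕ => (bseq m : ℂ) • (cop e X) ^ m)
      = fun m : ℕ => cop e ((bseq m : ℂ) • X ^ m) := by
    funext m
    rw [cop_smul, cop_pow]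
    congr 1
    simp [Complex.conj_ofReal]
  rw [heq]
  exact h

lemma mul_cancel_mid {u B : Matrix (Fin n) (Fin n) ℂ} (h : uᴴ * u = 1) :
    uᴴ * (u * B) = B := by
  rw [← Matrix.mul_assoc, h, Matrix.one_mul]

noncomputable def Mstep (a b : ℝ) (k : Fin d → ℝ) : Matrix (Fin n) (Fin n) ℂ :=
  Nmat O U a b k * invS (1 - (Nmat O U a b k)ᴴ * Nmat O U a b k)

lemma Mstep_mem (a b : ℝ) (HN : ∀ k, ‖Nmat O U a b k - 1‖ ≤ 1/4) (k : Fin d → ℝ) :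
    Mstep O U a b k ∈ Matrix.unitaryGroup (Fin n) ℂ :=
  mstep_unitary (HN k)

lemma Nmat_continuous (a b : ℝ) (ha : 0 ≤ a) (hb : 0 ≤ b)
    (hUcont : ∀ g : G, Continuous (U g)) : Continuous (Nmat O U a b) := by
  apply Continuous.fun_const_smul
  apply continuous_finset_sum
  intro h _
  exact Continuous.matrix_mul
    ((hUcont h).comp ((continuous_clamp ha).comp (continuous_Ovec O h⁻¹)))
    (((hUcont h).comp ((continuous_clamp hb).comp (continuous_Ovec O h⁻¹))).matrix_conjTranspose)

lemma Mstep_continuous (a b : ℝ) (ha : 0 ≤ a) (hb : 0 ≤ b)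
    (hUcont : ∀ g : G, Continuous (U g))
    (HN : ∀ k, ‖Nmat O U a b k - 1‖ ≤ 1/4) : Continuous (Mstep O U a b) := by
  have hNc := Nmat_continuous O U a b ha hb hUcont
  have hXc : Continuous (fun k => (1 : Matrix (Fin n) (Fin n) ℂ)
      - (Nmat O U a b k)ᴴ * Nmat O U a b k) :=
    continuous_const.sub (hNc.matrix_conjTranspose.matrix_mul hNc)
  have hSc : Continuous (fun k => invS (1 - (Nmat O U a b k)ᴴ * Nmat O U a b k)) := by
    unfold invS
    apply continuous_tsum
    · intro m
      exact (hXc.pow m).fun_const_smul _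
    · exact summable_geom916
    · intro m k
      exact invS_term_norm (Xnorm_le (HN k)) m
  exact hNc.mul hSc

lemma Mstep_equiv (a b : ℝ)
    (hUu : ∀ (g : G) (k : Fin d → ℝ), U g k ∈ Matrix.unitaryGroup (Fin n) ℂ)
    (hz' : ∀ g h : G, ‖z g h‖ = 1)
    (hcoc' : ∀ (g h : G) (k : Fin d → ℝ),
      U g (Ovec O h k) * cop (φ g) (U h k) = z g h • U (g * h) k)
    (HN : ∀ k, ‖Nmat O U a b k - 1‖ ≤ 1/4) (g : G) (k : Fin d → ℝ) :
    U g (clamp a k) * cop (φ g) (Mstep O U a b k)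
      = Mstep O U a b (Ovec O g k) * U g (clamp b k) := by
  have hua1 : (U g (clamp a k))ᴴ * U g (clamp a k) = 1 := by
    have := Matrix.mem_unitaryGroup_iff'.mp (hUu g (clamp a k))
    rwa [Matrix.star_eq_conjTranspose] at this
  have hub1 : (U g (clamp b k))ᴴ * U g (clamp b k) = 1 := by
    have := Matrix.mem_unitaryGroup_iff'.mp (hUu g (clamp b k))
    rwa [Matrix.star_eq_conjTranspose] at this
  have hub2 : U g (clamp b k) * (U g (clamp b k))ᴴ = 1 := by
    have := Matrix.mem_unitaryGroup_iff.mp (hUu g (clamp b k))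
    rwa [Matrix.star_eq_conjTranspose] at this
  set ua := U g (clamp a k) with hua
  set ub := U g (clamp b k) with hubdef
  set Nk := Nmat O U a b k with hNk
  have hNO : Nmat O U a b (Ovec O g k) = ua * cop (φ g) Nk * ubᴴ := by
    have h := Nmat_equiv O φ z U hUu hz' hcoc' a b g k
    have h2 := congrArg (fun M => M * ubᴴ) h
    rw [Matrix.mul_assoc (Nmat O U a b (Ovec O g k)) ub ubᴴ, hub2, Matrix.mul_one] at h2
    exact h2.symm
  set Xk := (1 : Matrix (Fin n) (Fin n) ℂ) - Nkᴴ * Nk with hXk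
  have hXb : ‖Xk‖ ≤ 9/16 := Xnorm_le (HN k)
  have hconjT : (ua * cop (φ g) Nk * ubᴴ)ᴴ = ub * ((cop (φ g) Nk)ᴴ * uaᴴ) := by
    rw [Matrix.conjTranspose_mul, Matrix.conjTranspose_mul, Matrix.conjTranspose_conjTranspose]
  have hXO : (1 : Matrix (Fin n) (Fin n) ℂ)
      - (Nmat O U a b (Ovec O g k))ᴴ * Nmat O U a b (Ovec O g k)
      = ub * cop (φ g) Xk * ubᴴ := by
    rw [hNO, hconjT]
    have e1 : ub * ((cop (φ g) Nk)ᴴ * uaᴴ) * (ua * cop (φ g) Nk * ubᴴ)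
        = ub * cop (φ g) (Nkᴴ * Nk) * ubᴴ := by
      rw [cop_mul, cop_conjTranspose]
      calc ub * ((cop (φ g) Nk)ᴴ * uaᴴ) * (ua * cop (φ g) Nk * ubᴴ)
          = ub * ((cop (φ g) Nk)ᴴ * ((uaᴴ * ua) * (cop (φ g) Nk * ubᴴ))) := by
            simp only [Matrix.mul_assoc]
        _ = ub * ((cop (φ g) Nk)ᴴ * (cop (φ g) Nk * ubᴴ)) := by
            rw [hua1, Matrix.one_mul]
        _ = ub * ((cop (φ g) Nk)ᴴ * cop (φ g) Nk) * ubᴴ := by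
            simp only [Matrix.mul_assoc]
    rw [e1, hXk, cop_sub, cop_one, Matrix.mul_sub, Matrix.sub_mul, Matrix.mul_one, hub2]
  have hSO : invS (1 - (Nmat O U a b (Ovec O g k))ᴴ * Nmat O U a b (Ovec O g k))
      = ub * cop (φ g) (invS Xk) * ubᴴ := by
    rw [hXO, invS_conj hub1 hub2 (invS_cop_summable (φ g) (invS_summable hXb)),
      invS_cop (φ g) (invS_summable hXb)]
  show ua * cop (φ g) (Mstep O U a b k) = Mstep O U a b (Ovec O g k) * ub
  unfold Mstep
  rw [← hNk, ← hXk, hSO, hNO, cop_mul]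
  simp only [Matrix.mul_assoc]
  rw [mul_cancel_mid hub1]
  rw [hub1, Matrix.mul_one]

lemma Mstep_frozen (a b : ℝ) (hba : b ≤ a)
    (hUu : ∀ (g : G) (k : Fin d → ℝ), U g k ∈ Matrix.unitaryGroup (Fin n) ℂ)
    (k : Fin d → ℝ) (hk : nrm k ≤ b) : Mstep O U a b k = 1 := by
  have hAg : ∀ h : G, Ag O U a b h k = 1 := by
    intro h
    unfold Ag
    have hx : nrm (Ovec O h⁻¹ k) = nrm k := nrm_Ovec O h⁻¹ k
    rw [clamp_eq_self (by rw [hx]; exact hk.trans hba), clamp_eq_self (by rw [hx]; exact hk)]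
    have := Matrix.mem_unitaryGroup_iff.mp (hUu h (Ovec O h⁻¹ k))
    rwa [Matrix.star_eq_conjTranspose] at this
  have hN : Nmat O U a b k = 1 := by
    unfold Nmat
    simp only [hAg]
    exact avg_one
  unfold Mstep
  rw [hN]
  simp [invS_zero]

lemma avg_one' : True := trivial

lemma exists_eta (hUcont : ∀ g : G, Continuous (U g)) (m : ℕ) :
    ∃ η : ℝ, 0 < η ∧ η ≤ 1 ∧ ∀ (h : G) (x y : Fin d → ℝ),
      nrm x ≤ (m : ℝ) + 2 → nrm y ≤ (m : ℝ) + 2 → nrm (x - y) ≤ η →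
        ‖U h x - U h y‖ ≤ 1/4 := by
  set K := {x : Fin d → ℝ | nrm x ≤ (m : ℝ) + 2} with hK
  have hKc : IsCompact K := isCompact_nrm_le _
  have hF : Continuous (fun x => (fun h : G => U h x)) := continuous_pi (fun h => hUcont h)
  have hUC : UniformContinuousOn (fun x => (fun h : G => U h x)) K :=
    hKc.uniformContinuousOn_of_continuous hF.continuousOn
  rw [Metric.uniformContinuousOn_iff] at hUC
  obtain ⟨δ, hδpos, hδ⟩ := hUC (1/4) (by norm_num)
  refine ⟨min 1 (δ/2), by positivity, min_le_left _ _, ?_⟩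
  intro h x y hx hy hxy
  have hdist : dist x y < δ := by
    rw [dist_eq_norm]
    calc ‖x - y‖ ≤ nrm (x - y) := pi_norm_le_nrm _
      _ ≤ min 1 (δ/2) := hxy
      _ ≤ δ/2 := min_le_right _ _
      _ < δ := by linarith
  have hd := hδ x hx y hy hdist
  calc ‖U h x - U h y‖ = dist (U h x) (U h y) := (dist_eq_norm _ _).symm
    _ ≤ dist (fun h : G => U h x) (fun h : G => U h y) :=
        dist_le_pi_dist (X := fun _ : G => Matrix (Fin n) (Fin n) ℂ)
          (fun h : G => U h x) (fun h : G => U h y) h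
    _ ≤ 1/4 := le_of_lt hd

end Main

theorem main_construction (d n : ℕ) (G : Type) [Group G] [Fintype G]
    (O : G →* Matrix.orthogonalGroup (Fin d) ℝ)
    (φ : G →* ℤˣ)
    (z : G → G → ℂ) (hz : ∀ g h : G, ‖z g h‖ = 1)
    (U : G → (Fin d → ℝ) → Matrix (Fin n) (Fin n) ℂ)
    (hUcont : ∀ g : G, Continuous (U g))
    (hUunitary : ∀ (g : G) (k : Fin d → ℝ), U g k ∈ Matrix.unitaryGroup (Fin n) ℂ)
    (hcocycle : ∀ (g h : G) (k : Fin d → ℝ),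
      U g (((O h : Matrix (Fin d) (Fin d) ℝ)).mulVec k) *
          (if φ g = 1 then U h k else (U h k).map (starRingEnd ℂ))
        = z g h • U (g * h) k) :
    ∃ V : (Fin d → ℝ) → Matrix (Fin n) (Fin n) ℂ,
      Continuous V ∧
      (∀ k : Fin d → ℝ, V k ∈ Matrix.unitaryGroup (Fin n) ℂ) ∧
      ∀ (g : G) (k : Fin d → ℝ),
        U g k * (if φ g = 1 then V k else (V k).map (starRingEnd ℂ))
          = V (((O g : Matrix (Fin d) (Fin d) ℝ)).mulVec k) * U g 0 := by
  classical
  have hcoc' : ∀ (g h : G) (k : Fin d → ℝ),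
      U g (Ovec O h k) * cop (φ g) (U h k) = z g h • U (g * h) k :=
    fun g h k => hcocycle g h k
  choose η hηpos hηle hη using fun m => exists_eta (U := U) hUcont m
  set ρ : ℕ → ℝ := fun j => Nat.rec (0 : ℝ) (fun _ r => r + η ⌊r⌋₊) j with hρ
  have hρ0 : ρ 0 = 0 := rfl
  have hρs : ∀ j, ρ (j + 1) = ρ j + η ⌊ρ j⌋₊ := fun j => rfl
  have hρnonneg : ∀ j, 0 ≤ ρ j := by
    intro j
    induction j with
    | zero => exact le_refl 0
    | succ j ih => rw [hρs]; have := hηpos ⌊ρ j⌋₊; linarith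
  have hρstep : ∀ j, ρ j ≤ ρ (j + 1) := by
    intro j; rw [hρs]; have := hηpos ⌊ρ j⌋₊; linarith
  have hρmono : ∀ {j j' : ℕ}, j ≤ j' → ρ j ≤ ρ j' :=
    fun {j j'} h => monotone_nat_of_le_succ hρstep h
  -- step bound
  have Hstep : ∀ j (h : G) (x : Fin d → ℝ),
      ‖U h (clamp (ρ (j + 1)) x) - U h (clamp (ρ j) x)‖ ≤ 1/4 := by
    intro j h x
    set m := ⌊ρ j⌋₊ with hm
    have h1 : ρ j < (m : ℝ) + 1 := Nat.lt_floor_add_one _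
    have h2 : ρ (j + 1) ≤ (m : ℝ) + 2 := by
      rw [hρs]; have := hηle m; rw [← hm]; linarith
    apply hη m h
    · exact (nrm_clamp_le (hρnonneg (j + 1)) x).trans h2
    · exact (nrm_clamp_le (hρnonneg j) x).trans (by linarith)
    · calc nrm (clamp (ρ (j + 1)) x - clamp (ρ j) x) ≤ |ρ (j + 1) - ρ j| :=
            nrm_clamp_sub_clamp x
        _ = η m := by
            rw [hρs, ← hm]
            simp [abs_of_nonneg (hηpos m).le]
  have HN : ∀ j k, ‖Nmat O U (ρ (j + 1)) (ρ j) k - 1‖ ≤ 1/4 :=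
    fun j k => Nmat_norm O U _ _ hUunitary (Hstep j) k
  set M : ℕ → (Fin d → ℝ) → Matrix (Fin n) (Fin n) ℂ :=
    fun j => Mstep O U (ρ (j + 1)) (ρ j) with hM
  set V : ℕ → (Fin d → ℝ) → Matrix (Fin n) (Fin n) ℂ :=
    fun j => Nat.rec (fun _ => 1) (fun j Vj => fun k => M j k * Vj k) j with hV
  have hV0 : ∀ k, V 0 k = 1 := fun _ => rfl
  have hVs : ∀ j k, V (j + 1) k = M j k * V j k := fun j k => rfl
  have hVcont : ∀ j, Continuous (V j) := by
    intro j
    induction j with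
    | zero => exact continuous_const
    | succ j ih =>
      have hMc : Continuous (M j) :=
        Mstep_continuous O U _ _ (hρnonneg (j + 1)) (hρnonneg j) hUcont (HN j)
      exact hMc.mul ih
  have hVuni : ∀ j k, V j k ∈ Matrix.unitaryGroup (Fin n) ℂ := by
    intro j
    induction j with
    | zero => exact fun k => one_mem _
    | succ j ih =>
      intro k
      rw [hVs]
      exact mul_mem (Mstep_mem O U _ _ (HN j) k) (ih k)
  have hVrel : ∀ j (g : G) (k : Fin d → ℝ),
      U g (clamp (ρ j) k) * cop (φ g) (V j k) = V j (Ovec O g k) * U g 0 := by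
    intro j
    induction j with
    | zero =>
      intro g k
      rw [hρ0, clamp_zero]
      show U g 0 * cop (φ g) 1 = 1 * U g 0
      rw [cop_one, Matrix.mul_one, Matrix.one_mul]
    | succ j ih =>
      intro g k
      rw [hVs, hVs, cop_mul]
      calc U g (clamp (ρ (j + 1)) k) * (cop (φ g) (M j k) * cop (φ g) (V j k))
          = (U g (clamp (ρ (j + 1)) k) * cop (φ g) (M j k)) * cop (φ g) (V j k) := by
            rw [Matrix.mul_assoc]
        _ = (M j (Ovec O g k) * U g (clamp (ρ j) k)) * cop (φ g) (V j k) := by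
            rw [Mstep_equiv O φ z U _ _ hUunitary hz hcoc' (HN j) g k]
        _ = M j (Ovec O g k) * (U g (clamp (ρ j) k) * cop (φ g) (V j k)) := by
            rw [Matrix.mul_assoc]
        _ = M j (Ovec O g k) * (V j (Ovec O g k) * U g 0) := by rw [ih g k]
        _ = M j (Ovec O g k) * V j (Ovec O g k) * U g 0 := by rw [Matrix.mul_assoc]
  have hfreeze : ∀ j (k : Fin d → ℝ), nrm k ≤ ρ j → V (j + 1) k = V j k := by
    intro j k hk
    rw [hVs]
    have hMone : M j k = 1 := Mstep_frozen O U _ _ (hρstep j) hUunitary k hk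
    rw [hMone, Matrix.one_mul]
  have hfreeze' : ∀ (j j' : ℕ), j ≤ j' → ∀ (k : Fin d → ℝ), nrm k ≤ ρ j → V j' k = V j k := by
    intro j j' hjj'
    induction j' , hjj' using Nat.le_induction with
    | base => intro k _; rfl
    | succ j' hjj' ih =>
      intro k hk
      rw [hfreeze j' k (hk.trans (hρmono hjj')), ih k hk]
  -- divergence
  have hdiv : ∀ m : ℕ, ∃ j, (m : ℝ) ≤ ρ j := by
    intro m
    induction m with
    | zero => exact ⟨0, by rw [hρ0]; norm_num⟩
    | succ m ih =>
      obtain ⟨j0, hj0⟩ := ih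
      have key : ∀ i : ℕ, ((m : ℝ) + 1 ≤ ρ (j0 + i)) ∨ ((m : ℝ) + i * η m ≤ ρ (j0 + i)) := by
        intro i
        induction i with
        | zero => right; simpa using hj0
        | succ i ihi =>
          have hmono1 : ρ (j0 + i) ≤ ρ (j0 + (i + 1)) := by
            have : j0 + i ≤ j0 + (i + 1) := by omega
            exact hρmono this
          rcases ihi with h | h
          · left; exact h.trans hmono1
          · rcases le_or_gt ((m : ℝ) + 1) (ρ (j0 + i)) with hge | hlt
            · left; exact hge.trans hmono1
            · have hge0 : (m : ℝ) ≤ ρ (j0 + i) := by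
                have : 0 ≤ (i : ℝ) * η m := mul_nonneg (Nat.cast_nonneg i) (hηpos m).le
                linarith
              have hfl : ⌊ρ (j0 + i)⌋₊ = m := by
                rw [Nat.floor_eq_iff (hρnonneg _)]
                exact ⟨hge0, by push_cast; linarith⟩
              right
              have hstep : ρ (j0 + (i + 1)) = ρ (j0 + i) + η m := by
                have : j0 + (i + 1) = (j0 + i) + 1 := by omega
                rw [this, hρs, hfl]
              rw [hstep]
              push_cast
              linarith
      refine ⟨j0 + ⌈(1 : ℝ) / η m⌉₊, ?_⟩
      rcases key ⌈(1 : ℝ) / η m⌉₊ with h | h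
      · push_cast; linarith
      · have hceil : (1 : ℝ) / η m ≤ (⌈(1 : ℝ) / η m⌉₊ : ℝ) := Nat.le_ceil _
        have hηm := hηpos m
        have : (1 : ℝ) ≤ (⌈(1 : ℝ) / η m⌉₊ : ℝ) * η m := by
          rw [div_le_iff₀ hηm] at hceil
          linarith
        push_cast
        linarith
  have hdivR : ∀ r : ℝ, ∃ j, r ≤ ρ j := by
    intro r
    obtain ⟨j, hj⟩ := hdiv ⌈r⌉₊
    exact ⟨j, (Nat.le_ceil r).trans hj⟩
  choose J hJ using hdivR
  refine ⟨fun k => V (J (nrm k)) k, ?_, fun k => hVuni _ k, ?_⟩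
  · rw [continuous_iff_continuousAt]
    intro k0
    set R := nrm k0 + 1 with hR
    set j0 := J R with hj0
    have hopen : IsOpen {k : Fin d → ℝ | nrm k < R} :=
      isOpen_lt continuous_nrm continuous_const
    have hmem : k0 ∈ {k : Fin d → ℝ | nrm k < R} := by
      simp only [Set.mem_setOf_eq, hR]; linarith
    have heq : ∀ k ∈ {k : Fin d → ℝ | nrm k < R}, V j0 k = V (J (nrm k)) k := by
      intro k hk
      have h1 : nrm k ≤ ρ (J (nrm k)) := hJ _
      have h2 : nrm k ≤ ρ j0 := le_trans (le_of_lt hk) (hJ R)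
      rcases le_total (J (nrm k)) j0 with h | h
      · rw [hfreeze' _ j0 h k h1]
      · rw [hfreeze' j0 (J (nrm k)) h k h2]
    exact ((hVcont j0).continuousAt).congr
      (Filter.eventuallyEq_of_mem (hopen.mem_nhds hmem) heq)
  · intro g k
    have hk : nrm k ≤ ρ (J (nrm k)) := hJ (nrm k)
    have hOg : nrm (Ovec O g k) = nrm k := nrm_Ovec O g k
    have hrel := hVrel (J (nrm k)) g k
    rw [clamp_eq_self hk] at hrel
    show U g k * cop (φ g) (V (J (nrm k)) k)
      = V (J (nrm (Ovec O g k))) (Ovec O g k) * U g 0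
    rw [hOg]
    exact hrel

end CanonicalGauge

/-- **Existence of a canonical gauge (Theorem 1 of the paper).**
Let a finite group `G` act linearly on `ℝ^d` through a homomorphism into the orthogonal
group, let `φ : G → {±1}` be a homomorphism (unitary/antiunitary grading) and
`z : G × G → U(1)` a factor system.  Given a continuous family of projective (possibly
antiunitary) symmetry operators `U_g(k)` satisfying
`U_g(O_h k) ⬝ U_h(k)^{φ_g} = z(g,h) ⬝ U_{gh}(k)`, there exists a continuous family of
unitaries `V(k)` such that `U_g(k) ⬝ V(k)^{φ_g} = V(O_g k) ⬝ U_g(0)` for all `g, k`;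
i.e. the gauge `V` makes the symmetry operators constant, equal to their value at the
fixed point `0`. -/
theorem exists_canonical_gauge (d n : ℕ) (G : Type) [Group G] [Fintype G]
    (O : G →* Matrix.orthogonalGroup (Fin d) ℝ)
    (φ : G →* ℤˣ)
    (z : G → G → ℂ) (hz : ∀ g h : G, ‖z g h‖ = 1)
    (U : G → (Fin d → ℝ) → Matrix (Fin n) (Fin n) ℂ)
    (hUcont : ∀ g : G, Continuous (U g))
    (hUunitary : ∀ (g : G) (k : Fin d → ℝ), U g k ∈ Matrix.unitaryGroup (Fin n) ℂ)
    (hcocycle : ∀ (g h : G) (k : Fin d → ℝ),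
      U g (((O h : Matrix (Fin d) (Fin d) ℝ)).mulVec k) *
          (if φ g = 1 then U h k else (U h k).map (starRingEnd ℂ))
        = z g h • U (g * h) k) :
    ∃ V : (Fin d → ℝ) → Matrix (Fin n) (Fin n) ℂ,
      Continuous V ∧
      (∀ k : Fin d → ℝ, V k ∈ Matrix.unitaryGroup (Fin n) ℂ) ∧
      ∀ (g : G) (k : Fin d → ℝ),
        U g k * (if φ g = 1 then V k else (V k).map (starRingEnd ℂ))
          = V (((O g : Matrix (Fin d) (Fin d) ℝ)).mulVec k) * U g 0 := by
  exact CanonicalGauge.main_construction d n G O φ z hz U hUcont hUunitary hcocycle
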